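/- The element h² belongs to the commutator subgroup ⁅G,G⁆ of G. -/

import Mathlib

/-- The element `h²` belongs to the commutator subgroup of `G = ⟨g, h⟩ ≤ GL₂(ℝ)`,
where `g = !![1+√2, 0; 0, 1]` and `h = !![1, 1; 0, 1]`. -/
theorem stmt10 (g h : (Matrix (Fin 2) (Fin 2) ℝ)ˣ)
    (hg : (g : Matrix (Fin 2) (Fin 2) ℝ) = !![1 + Real.sqrt 2, 0; 0, 1])
    (hh : (h : Matrix (Fin 2) (Fin 2) ℝ) = !![1, 1; 0, 1]) :
    h ^ 2 ∈ ⁅Subgroup.closure {g, h}, Subgroup.closure {g, h}⁆ := by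
  have hs2 : Real.sqrt 2 * Real.sqrt 2 = 2 := Real.mul_self_sqrt (by norm_num)
  have hginv : ((g⁻¹ : (Matrix (Fin 2) (Fin 2) ℝ)ˣ) : Matrix (Fin 2) (Fin 2) ℝ)
      = !![Real.sqrt 2 - 1, 0; 0, 1] := by
    have : (g : Matrix (Fin 2) (Fin 2) ℝ) * !![Real.sqrt 2 - 1, 0; 0, 1] = 1 := by
      rw [hg]
      ext i j
      fin_cases i <;> fin_cases j <;>
        simp [Matrix.mul_apply, Fin.sum_univ_two] <;> nlinarith [hs2]
    exact Units.inv_eq_of_mul_eq_one_right this ▸ rfl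
  have hhinv : ((h⁻¹ : (Matrix (Fin 2) (Fin 2) ℝ)ˣ) : Matrix (Fin 2) (Fin 2) ℝ)
      = !![1, -1; 0, 1] := by
    have : (h : Matrix (Fin 2) (Fin 2) ℝ) * !![1, -1; 0, 1] = 1 := by
      rw [hh]
      ext i j
      fin_cases i <;> fin_cases j <;>
        simp [Matrix.mul_apply, Fin.sum_univ_two]
    exact Units.inv_eq_of_mul_eq_one_right this ▸ rfl
  have hgmem : g ∈ Subgroup.closure {g, h} :=
    Subgroup.subset_closure (by simp)
  have hhmem : h ∈ Subgroup.closure {g, h} :=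
    Subgroup.subset_closure (by simp)
  open scoped commutatorElement in
  have key : h ^ 2 = ⁅g, h⁆ * ⁅g⁻¹, h⁆⁻¹ := by
    apply Units.ext
    simp only [commutatorElement_def, Units.val_pow_eq_pow_val, mul_inv_rev, inv_inv,
      Units.val_mul, hg, hh, hginv, hhinv]
    ext i j
    fin_cases i <;> fin_cases j <;>
      simp [pow_two, Matrix.mul_apply, Fin.sum_univ_two] <;>
      first
        | ring1
        | linear_combination (Real.sqrt 2 - 1) * hs2
        | linear_combination (-(Real.sqrt 2 * Real.sqrt 2)) * hs2
  rw [key]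
  exact mul_mem (Subgroup.commutator_mem_commutator hgmem hhmem)
    (inv_mem (Subgroup.commutator_mem_commutator (inv_mem hgmem) hhmem))
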